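/- Let 0 < α ≤ β, C_* > 0 and m_* ∈ ℝ, and let γ be the Gaussian measure on ℝ with mean m_* and variance C_*. Let h : ℝ → ℝ be measurable with α ≤ h(θ) ≤ β for all θ and ∫ h dγ = 1/C_*. Define A₁ = ∫ h(θ)·(θ − m_*) dγ(θ), A₂ = ∫ h(θ)·(θ − m_*)² dγ(θ), and λ₂ = (−(3/2 + A₂/2) + √((1/2 − A₂/2)² + 2·A₁²·C_*))/2. Then λ₂ ≤ −1/((7 + 4/√π)·(1 + log(β/α))). -/

import Mathlib

open MeasureTheory ProbabilityTheory
open Real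
open scoped NNReal ENNReal

lemma gr_integral_eq (m C : ℝ) (hC : 0 < C) (g : ℝ → ℝ) :
    ∫ θ, g θ ∂(gaussianReal m C.toNNReal)
      = ∫ x, gaussianPDFReal m C.toNNReal x * g x := by
  have hv : C.toNNReal ≠ 0 := by simp [Real.toNNReal_eq_zero, not_le, hC]
  rw [gaussianReal_of_var_ne_zero _ hv]
  have : (gaussianPDF m C.toNNReal) = fun x => ((Real.toNNReal (gaussianPDFReal m C.toNNReal x) : ℝ≥0) : ℝ≥0∞) := by
    funext x; rfl
  rw [this, integral_withDensity_eq_integral_smul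
    ((measurable_gaussianPDFReal m C.toNNReal).real_toNNReal)]
  congr 1; funext x
  simp [NNReal.smul_def, Real.coe_toNNReal _ (gaussianPDFReal_nonneg m _ x)]

lemma gr_integrable_iff (m C : ℝ) (hC : 0 < C) (g : ℝ → ℝ) :
    Integrable g (gaussianReal m C.toNNReal)
      ↔ Integrable (fun x => gaussianPDFReal m C.toNNReal x * g x) volume := by
  have hv : C.toNNReal ≠ 0 := by simp [Real.toNNReal_eq_zero, not_le, hC]
  rw [gaussianReal_of_var_ne_zero _ hv]
  have : (gaussianPDF m C.toNNReal) = fun x => ((Real.toNNReal (gaussianPDFReal m C.toNNReal x) : ℝ≥0) : ℝ≥0∞) := by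
    funext x; rfl
  rw [this, integrable_withDensity_iff_integrable_smul
    ((measurable_gaussianPDFReal m C.toNNReal).real_toNNReal)]
  constructor <;> intro H <;> refine H.congr (Filter.Eventually.of_forall fun x => ?_) <;>
    simp [NNReal.smul_def, Real.coe_toNNReal _ (gaussianPDFReal_nonneg m _ x)]

lemma sq_exp_bound {C : ℝ} (hC : 0 < C) (y : ℝ) :
    y^2 * Real.exp (-(y^2/(4*C))) ≤ 6*C*Real.exp (-1) * Real.exp (-(1/(12*C)) * y^2) := by
  have hsplit : Real.exp (-(y^2/(4*C))) = Real.exp (-(y^2/(6*C))) * Real.exp (-(1/(12*C)) * y^2) := by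
    rw [← Real.exp_add]; congr 1; field_simp; ring
  rw [hsplit, ← mul_assoc]
  have h2 : y^2 * Real.exp (-(y^2/(6*C))) ≤ 6*C*Real.exp (-1) := by
    have h1 : y^2/(6*C) ≤ Real.exp (y^2/(6*C) - 1) := by
      have := Real.add_one_le_exp (y^2/(6*C) - 1); linarith
    have h3 : y^2/(6*C) * Real.exp (-(y^2/(6*C))) ≤ Real.exp (-1) := by
      have h5 := mul_le_mul_of_nonneg_right h1 (Real.exp_nonneg (-(y^2/(6*C))))
      rwa [← Real.exp_add, show y^2/(6*C) - 1 + -(y^2/(6*C)) = -1 by ring] at h5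
    have h4 := mul_le_mul_of_nonneg_left h3 (le_of_lt (by positivity : (0:ℝ) < 6*C))
    calc y^2 * Real.exp (-(y^2/(6*C))) = 6*C*(y^2/(6*C) * Real.exp (-(y^2/(6*C)))) := by
          field_simp
      _ ≤ 6*C*Real.exp (-1) := h4
  exact mul_le_mul_of_nonneg_right h2 (Real.exp_nonneg _)

lemma gaussian_moment_bound (m C : ℝ) (hC : 0 < C) :
    Integrable (fun θ => (θ - m)^2 * Real.exp ((θ - m)^2 / (4*C))) (gaussianReal m C.toNNReal) ∧
    ∫ θ, (θ - m)^2 * Real.exp ((θ - m)^2 / (4*C)) ∂(gaussianReal m C.toNNReal)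
      ≤ 6*Real.sqrt 6*C*Real.exp (-1) := by
  have hCc : ((C.toNNReal : ℝ≥0) : ℝ) = C := Real.coe_toNNReal C hC.le
  have hpdf_eq : ∀ x : ℝ, gaussianPDFReal m C.toNNReal x * ((x - m)^2 * Real.exp ((x - m)^2/(4*C)))
      = (Real.sqrt (2*π*C))⁻¹ * ((x - m)^2 * Real.exp (-((x - m)^2/(4*C)))) := by
    intro x
    have hexp : Real.exp (-(x - m)^2/(2*C)) * Real.exp ((x - m)^2/(4*C))
        = Real.exp (-((x - m)^2/(4*C))) := by
      rw [← Real.exp_add]; congr 1; field_simp; ring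
    calc gaussianPDFReal m C.toNNReal x * ((x - m)^2 * Real.exp ((x - m)^2/(4*C)))
        = (Real.sqrt (2*π*C))⁻¹ * ((x - m)^2 *
            (Real.exp (-(x - m)^2/(2*C)) * Real.exp ((x - m)^2/(4*C)))) := by
          simp only [gaussianPDFReal, hCc]; ring
      _ = _ := by rw [hexp]
  have hb : (0:ℝ) < 1/(12*C) := by positivity
  have hDint : Integrable (fun x : ℝ =>
      (Real.sqrt (2*π*C))⁻¹ * (6*C*Real.exp (-1)) * Real.exp (-(1/(12*C)) * (x - m)^2)) volume :=
    ((integrable_exp_neg_mul_sq hb).comp_sub_right m).const_mul _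
  have hle : ∀ x : ℝ, gaussianPDFReal m C.toNNReal x * ((x - m)^2 * Real.exp ((x - m)^2/(4*C)))
      ≤ (Real.sqrt (2*π*C))⁻¹ * (6*C*Real.exp (-1)) * Real.exp (-(1/(12*C)) * (x - m)^2) := by
    intro x
    rw [hpdf_eq x]
    calc (Real.sqrt (2*π*C))⁻¹ * ((x - m)^2 * Real.exp (-((x - m)^2/(4*C))))
        ≤ (Real.sqrt (2*π*C))⁻¹ * (6*C*Real.exp (-1) * Real.exp (-(1/(12*C)) * (x - m)^2)) :=
          mul_le_mul_of_nonneg_left (sq_exp_bound hC (x - m))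
            (inv_nonneg.2 (Real.sqrt_nonneg _))
      _ = (Real.sqrt (2*π*C))⁻¹ * (6*C*Real.exp (-1)) * Real.exp (-(1/(12*C)) * (x - m)^2) := by
          ring
  have hnn : ∀ x : ℝ, 0 ≤ gaussianPDFReal m C.toNNReal x * ((x - m)^2 * Real.exp ((x - m)^2/(4*C))) :=
    fun x => mul_nonneg (gaussianPDFReal_nonneg m _ x) (by positivity)
  have hmeasG : Measurable (fun x : ℝ =>
      gaussianPDFReal m C.toNNReal x * ((x - m)^2 * Real.exp ((x - m)^2/(4*C)))) :=
    (measurable_gaussianPDFReal m _).mul (by fun_prop)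
  have hpdfGint : Integrable (fun x : ℝ =>
      gaussianPDFReal m C.toNNReal x * ((x - m)^2 * Real.exp ((x - m)^2/(4*C)))) volume := by
    refine hDint.mono' hmeasG.aestronglyMeasurable (Filter.Eventually.of_forall fun x => ?_)
    rw [Real.norm_eq_abs, abs_of_nonneg (hnn x)]
    exact hle x
  constructor
  · exact (gr_integrable_iff m C hC _).2 hpdfGint
  · rw [gr_integral_eq m C hC]
    calc ∫ x, gaussianPDFReal m C.toNNReal x * ((x - m)^2 * Real.exp ((x - m)^2/(4*C)))
        ≤ ∫ x, (Real.sqrt (2*π*C))⁻¹ * (6*C*Real.exp (-1)) * Real.exp (-(1/(12*C)) * (x - m)^2) :=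
          integral_mono hpdfGint hDint hle
      _ = (Real.sqrt (2*π*C))⁻¹ * (6*C*Real.exp (-1)) * Real.sqrt (π/(1/(12*C))) := by
          rw [integral_const_mul]
          congr 1
          rw [show (fun a : ℝ => Real.exp (-(1/(12*C)) * (a - m)^2))
              = fun a : ℝ => (fun y : ℝ => Real.exp (-(1/(12*C)) * y^2)) (a - m) from rfl,
            integral_sub_right_eq_self (fun y : ℝ => Real.exp (-(1/(12*C)) * y^2)) m,
            integral_gaussian]
      _ = 6*Real.sqrt 6*C*Real.exp (-1) := by
          have h12 : π/(1/(12*C)) = 6*(2*π*C) := by field_simp; ring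
          rw [h12, Real.sqrt_mul (by norm_num : (0:ℝ) ≤ 6)]
          have hs : Real.sqrt (2*π*C) ≠ 0 := by positivity
          field_simp


set_option maxHeartbeats 1000000

/-- Lower bound on the local convergence rate of the one-dimensional Gaussian
approximate Fisher–Rao gradient flow at its stationary point: with
`γ = N(m⋆, C⋆)`, `α ≤ h ≤ β`, `∫ h dγ = 1/C⋆`,
`A₁ = ∫ h(θ)(θ−m⋆) dγ`, `A₂ = ∫ h(θ)(θ−m⋆)² dγ` and
`λ₂ = (−(3/2 + A₂/2) + √((1/2 − A₂/2)² + 2A₁²C⋆))/2`, one has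
`λ₂ ≤ −1/((7 + 4/√π)(1 + log(β/α)))`. -/
theorem gaussian_fisherRao_local_rate_logconcave
    (α β Cstar mstar : ℝ)
    (hα : 0 < α) (hαβ : α ≤ β) (hCstar : 0 < Cstar)
    (h : ℝ → ℝ) (hmeas : Measurable h)
    (hbound : ∀ θ, α ≤ h θ ∧ h θ ≤ β)
    (hstat : ∫ θ, h θ ∂(gaussianReal mstar Cstar.toNNReal) = 1 / Cstar)
    (A₁ A₂ lam₂ : ℝ)
    (hA₁ : A₁ = ∫ θ, h θ * (θ - mstar) ∂(gaussianReal mstar Cstar.toNNReal))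
    (hA₂ : A₂ = ∫ θ, h θ * (θ - mstar) ^ 2 ∂(gaussianReal mstar Cstar.toNNReal))
    (hlam₂ : lam₂ = (-(3 / 2 + A₂ / 2) +
      Real.sqrt ((1 / 2 - A₂ / 2) ^ 2 + 2 * A₁ ^ 2 * Cstar)) / 2) :
    lam₂ ≤ -(1 / ((7 + 4 / Real.sqrt Real.pi) * (1 + Real.log (β / α)))) := by
  have hβ : 0 < β := lt_of_lt_of_le hα hαβ
  have hh0 : ∀ θ, 0 ≤ h θ := fun θ => le_trans hα.le (hbound θ).1
  obtain ⟨hGmInt, hGmBound⟩ := gaussian_moment_bound mstar Cstar hCstar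
  have hGm_ge : ∀ θ : ℝ, (θ - mstar)^2
      ≤ (θ - mstar)^2 * Real.exp ((θ - mstar)^2 / (4*Cstar)) := by
    intro θ
    nlinarith [Real.one_le_exp (by positivity : (0:ℝ) ≤ (θ - mstar)^2 / (4*Cstar)),
      sq_nonneg (θ - mstar)]
  -- generic integrability lemma
  have Idom : ∀ (f : ℝ → ℝ), Measurable f → ∀ a b : ℝ, 0 ≤ b →
      (∀ θ, |f θ| ≤ a + b*(θ - mstar)^2) →
      Integrable f (gaussianReal mstar Cstar.toNNReal) := by
    intro f hf a b hb hfb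
    have hdom : Integrable (fun θ => a + b * ((θ - mstar)^2 *
        Real.exp ((θ - mstar)^2 / (4*Cstar)))) (gaussianReal mstar Cstar.toNNReal) :=
      (integrable_const a).add (hGmInt.const_mul b)
    refine hdom.mono' hf.aestronglyMeasurable (Filter.Eventually.of_forall fun θ => ?_)
    rw [Real.norm_eq_abs]
    nlinarith [hGm_ge θ, hfb θ, mul_le_mul_of_nonneg_left (hGm_ge θ) hb]
  have habs : ∀ y : ℝ, |y| ≤ 1 + y^2 := fun y => by
    nlinarith [sq_abs y, abs_nonneg y, sq_nonneg (|y| - 1)]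
  have Ih : Integrable h (gaussianReal mstar Cstar.toNNReal) :=
    Idom h hmeas β 0 le_rfl (fun θ => by
      rw [abs_of_nonneg (hh0 θ)]; nlinarith [(hbound θ).2])
  have Ihx : Integrable (fun θ => h θ * (θ - mstar)) (gaussianReal mstar Cstar.toNNReal) := by
    refine Idom _ (hmeas.mul (by fun_prop)) β β hβ.le (fun θ => ?_)
    calc |h θ * (θ - mstar)| = |h θ| * |θ - mstar| := abs_mul _ _
      _ ≤ β * (1 + (θ - mstar)^2) := by
          refine mul_le_mul ?_ (habs _) (abs_nonneg _) hβ.le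
          rw [abs_of_nonneg (hh0 θ)]; exact (hbound θ).2
      _ = β + β*(θ - mstar)^2 := by ring
  have Ihx2 : Integrable (fun θ => h θ * (θ - mstar)^2) (gaussianReal mstar Cstar.toNNReal) := by
    refine Idom _ (hmeas.mul (by fun_prop)) 0 β hβ.le (fun θ => ?_)
    rw [abs_of_nonneg (mul_nonneg (hh0 θ) (sq_nonneg _))]
    nlinarith [mul_le_mul_of_nonneg_right (hbound θ).2 (sq_nonneg (θ - mstar))]
  have Icsq : Integrable (fun θ => h θ * (A₁*Cstar - (θ - mstar))^2)
      (gaussianReal mstar Cstar.toNNReal) := by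
    refine Idom _ (hmeas.mul (by fun_prop)) (2*β*(A₁*Cstar)^2) (2*β) (by positivity) (fun θ => ?_)
    rw [abs_of_nonneg (mul_nonneg (hh0 θ) (sq_nonneg _))]
    nlinarith [sq_nonneg (A₁*Cstar + (θ - mstar)), (hbound θ).2, hh0 θ, sq_nonneg (A₁*Cstar - (θ - mstar)),
      mul_le_mul_of_nonneg_right (hbound θ).2 (sq_nonneg (A₁*Cstar - (θ - mstar)))]
  -- Cauchy-Schwarz : A₁^2 * Cstar ≤ A₂
  have hCS : A₁^2 * Cstar ≤ A₂ := by
    have h0 : 0 ≤ ∫ θ, h θ * (A₁*Cstar - (θ - mstar))^2 ∂(gaussianReal mstar Cstar.toNNReal) :=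
      integral_nonneg fun θ => mul_nonneg (hh0 θ) (sq_nonneg _)
    have hval : ∫ θ, h θ * (A₁*Cstar - (θ - mstar))^2 ∂(gaussianReal mstar Cstar.toNNReal)
        = (A₁*Cstar)^2*(1/Cstar) - (2*(A₁*Cstar))*A₁ + A₂ := by
      calc ∫ θ, h θ * (A₁*Cstar - (θ - mstar))^2 ∂(gaussianReal mstar Cstar.toNNReal)
          = ∫ θ, ((A₁*Cstar)^2 * h θ - (2*(A₁*Cstar))*(h θ*(θ - mstar)))
              + h θ*(θ - mstar)^2 ∂(gaussianReal mstar Cstar.toNNReal) := by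
            congr 1; funext θ; ring
        _ = (∫ θ, (A₁*Cstar)^2 * h θ - (2*(A₁*Cstar))*(h θ*(θ - mstar))
              ∂(gaussianReal mstar Cstar.toNNReal))
            + ∫ θ, h θ*(θ - mstar)^2 ∂(gaussianReal mstar Cstar.toNNReal) :=
            integral_add ((Ih.const_mul _).sub (Ihx.const_mul _)) Ihx2
        _ = ((∫ θ, (A₁*Cstar)^2 * h θ ∂(gaussianReal mstar Cstar.toNNReal))
              - ∫ θ, (2*(A₁*Cstar))*(h θ*(θ - mstar)) ∂(gaussianReal mstar Cstar.toNNReal)) + A₂ := by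
            rw [integral_sub (Ih.const_mul _) (Ihx.const_mul _), hA₂]
        _ = (A₁*Cstar)^2*(1/Cstar) - (2*(A₁*Cstar))*A₁ + A₂ := by
            rw [integral_const_mul, integral_const_mul, hstat, hA₁]
    rw [hval] at h0
    have hc2 : (A₁*Cstar)^2*(1/Cstar) = A₁^2*Cstar := by field_simp
    nlinarith [h0]
  have hαC : α*Cstar ≤ 1 := by
    have h2 : ∫ _θ, (α:ℝ) ∂(gaussianReal mstar Cstar.toNNReal)
        ≤ ∫ θ, h θ ∂(gaussianReal mstar Cstar.toNNReal) :=
      integral_mono (integrable_const _) Ih (fun θ => (hbound θ).1)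
    rw [integral_const, probReal_univ, one_smul, hstat] at h2
    calc α*Cstar ≤ (1/Cstar)*Cstar := mul_le_mul_of_nonneg_right h2 hCstar.le
      _ = 1 := by field_simp
  have hL : 0 ≤ Real.log (β/α) := Real.log_nonneg ((one_le_div hα).2 hαβ)
  -- pointwise bound for A₂
  have hpt : ∀ θ : ℝ, h θ * (θ - mstar)^2
      ≤ h θ * ((4+4*Real.log (β/α))*Cstar)
        + (β*Real.exp (-(1+Real.log (β/α)))) * ((θ - mstar)^2 *
            Real.exp ((θ - mstar)^2/(4*Cstar))) := by
    intro θ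
    by_cases hcase : (θ - mstar)^2 ≤ (4+4*Real.log (β/α))*Cstar
    · have h1 : h θ * (θ - mstar)^2 ≤ h θ * ((4+4*Real.log (β/α))*Cstar) :=
        mul_le_mul_of_nonneg_left hcase (hh0 θ)
      have h2 : 0 ≤ (β*Real.exp (-(1+Real.log (β/α)))) * ((θ - mstar)^2 *
          Real.exp ((θ - mstar)^2/(4*Cstar))) := by positivity
      linarith
    · push_neg at hcase
      have h1 : (1+Real.log (β/α)) ≤ (θ - mstar)^2/(4*Cstar) := by
        rw [le_div_iff₀ (by positivity)]; nlinarith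
      have h2 : (1:ℝ) ≤ Real.exp (-(1+Real.log (β/α))) *
          Real.exp ((θ - mstar)^2/(4*Cstar)) := by
        rw [← Real.exp_add]
        refine Real.one_le_exp ?_
        linarith
      have h3 : h θ * (θ - mstar)^2 ≤ β * (θ - mstar)^2 :=
        mul_le_mul_of_nonneg_right (hbound θ).2 (sq_nonneg _)
      have h4 : β * (θ - mstar)^2 * 1 ≤ β * (θ - mstar)^2 *
          (Real.exp (-(1+Real.log (β/α))) * Real.exp ((θ - mstar)^2/(4*Cstar))) :=
        mul_le_mul_of_nonneg_left h2 (by positivity)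
      have h5 : 0 ≤ h θ * ((4+4*Real.log (β/α))*Cstar) :=
        mul_nonneg (hh0 θ) (mul_nonneg (by linarith) hCstar.le)
      have h6 : β * (θ - mstar)^2 *
          (Real.exp (-(1+Real.log (β/α))) * Real.exp ((θ - mstar)^2/(4*Cstar)))
          = (β*Real.exp (-(1+Real.log (β/α)))) * ((θ - mstar)^2 *
            Real.exp ((θ - mstar)^2/(4*Cstar))) := by ring
      linarith [h3, h4, h5, h6]
  -- integrate the pointwise bound
  have hA₂le : A₂ ≤ 4 + 4*Real.log (β/α) + 6*Real.sqrt 6*Real.exp (-2) := by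
    have hint : A₂ ≤ ∫ θ, (h θ * ((4+4*Real.log (β/α))*Cstar)
        + (β*Real.exp (-(1+Real.log (β/α)))) * ((θ - mstar)^2 *
            Real.exp ((θ - mstar)^2/(4*Cstar)))) ∂(gaussianReal mstar Cstar.toNNReal) := by
      rw [hA₂]
      exact integral_mono Ihx2 ((Ih.mul_const _).add (hGmInt.const_mul _)) hpt
    rw [integral_add (Ih.mul_const _) (hGmInt.const_mul _), integral_mul_const,
      integral_const_mul, hstat] at hint
    have hE1 : 1/Cstar * ((4+4*Real.log (β/α))*Cstar) = 4+4*Real.log (β/α) := by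
      field_simp
    have hexpL : Real.exp (-(1+Real.log (β/α))) = Real.exp (-1) * (α/β) := by
      rw [show -(1+Real.log (β/α)) = -1 + -Real.log (β/α) by ring, Real.exp_add,
        Real.exp_neg (Real.log (β/α)), Real.exp_log (by positivity), inv_div]
    have hE2 : β*Real.exp (-(1+Real.log (β/α))) *
        (∫ θ, (θ - mstar)^2 * Real.exp ((θ - mstar)^2/(4*Cstar))
          ∂(gaussianReal mstar Cstar.toNNReal))
        ≤ 6*Real.sqrt 6*Real.exp (-2) := by
      have hpos : 0 ≤ β*Real.exp (-(1+Real.log (β/α))) := by positivity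
      calc β*Real.exp (-(1+Real.log (β/α))) *
          (∫ θ, (θ - mstar)^2 * Real.exp ((θ - mstar)^2/(4*Cstar))
            ∂(gaussianReal mstar Cstar.toNNReal))
          ≤ β*Real.exp (-(1+Real.log (β/α))) * (6*Real.sqrt 6*Cstar*Real.exp (-1)) :=
            mul_le_mul_of_nonneg_left hGmBound hpos
        _ = 6*Real.sqrt 6*(Real.exp (-1)*Real.exp (-1))*(α*Cstar) := by
            rw [hexpL]; field_simp
        _ ≤ 6*Real.sqrt 6*(Real.exp (-1)*Real.exp (-1))*1 := by
            refine mul_le_mul_of_nonneg_left hαC (by positivity)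
        _ = 6*Real.sqrt 6*Real.exp (-2) := by
            rw [← Real.exp_add]; norm_num
    rw [hE1] at hint
    linarith [hint, hE2]
  -- numeric bound
  have hnum : 6*Real.sqrt 6*Real.exp (-2) ≤ 4/Real.sqrt π := by
    have h6 : Real.sqrt 6 ≤ 2.4495 := by
      rw [show (2.4495:ℝ) = Real.sqrt (2.4495^2) from (Real.sqrt_sq (by norm_num)).symm]
      exact Real.sqrt_le_sqrt (by norm_num)
    have hππ : Real.sqrt π ≤ 1.7725 := by
      rw [show (1.7725:ℝ) = Real.sqrt (1.7725^2) from (Real.sqrt_sq (by norm_num)).symm]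
      exact Real.sqrt_le_sqrt (by nlinarith [Real.pi_lt_d6])
    have hπ0 : 0 < Real.sqrt π := Real.sqrt_pos.2 Real.pi_pos
    have he : Real.exp (-2) ≤ 0.1354 := by
      have h2 : (7.389:ℝ) ≤ Real.exp 2 := by
        rw [show (2:ℝ) = 1+1 by norm_num, Real.exp_add]
        nlinarith [Real.exp_one_gt_d9]
      rw [show (-2:ℝ) = -(2:ℝ) by norm_num, Real.exp_neg]
      have h3 : (Real.exp 2)⁻¹ ≤ (7.389:ℝ)⁻¹ :=
        inv_anti₀ (by norm_num) h2
      calc (Real.exp 2)⁻¹ ≤ (7.389:ℝ)⁻¹ := h3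
        _ ≤ 0.1354 := by norm_num
    have h47 : (4:ℝ)/1.7725 ≤ 4/Real.sqrt π := by
      rw [div_le_div_iff₀ (by norm_num) hπ0]
      nlinarith
    have hs6 : 0 ≤ Real.sqrt 6 := Real.sqrt_nonneg _
    nlinarith [mul_le_mul h6 he (Real.exp_nonneg _) (by norm_num : (0:ℝ) ≤ 2.4495)]
  -- assemble
  set M := (7 + 4/Real.sqrt π) * (1 + Real.log (β/α)) with hMdef
  have hπ0 : 0 < Real.sqrt π := Real.sqrt_pos.2 Real.pi_pos
  have h4π : 0 ≤ 4/Real.sqrt π := by positivity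
  have hM : A₂ + 3 ≤ M := by
    rw [hMdef]
    nlinarith [hA₂le, hnum, hL, mul_nonneg h4π hL]
  have hA₂nn : 0 ≤ A₂ := by
    rw [hA₂]; exact integral_nonneg fun θ => mul_nonneg (hh0 θ) (sq_nonneg _)
  have hMpos : 0 < M := by
    rw [hMdef]; positivity
  have hM3 : 3 ≤ M := by linarith
  have h2M' : 2/M = 2*(1/M) := by ring
  have hRnn : 0 ≤ (A₂+3)/2 - 2/M := by
    have h2M : 2/M ≤ 2/3 := by
      rw [div_le_div_iff₀ hMpos (by norm_num)]; linarith
    linarith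
  have hqM : (A₂+3)*(1/M) ≤ 1 := by
    rw [mul_one_div, div_le_one hMpos]; exact hM
  have hq : 0 < 1/M := by positivity
  have hE : (1/2 - A₂/2)^2 + 2*A₁^2*Cstar ≤ ((A₂+3)/2 - 2/M)^2 := by
    rw [h2M']
    nlinarith [hCS, hqM, sq_nonneg (1/M), hq.le]
  have hsqrt : Real.sqrt ((1/2 - A₂/2)^2 + 2*A₁^2*Cstar) ≤ (A₂+3)/2 - 2/M :=
    le_trans (Real.sqrt_le_sqrt hE) (le_of_eq (Real.sqrt_sq hRnn))
  rw [hlam₂]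
  linarith [hsqrt, h2M']
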